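/- Let 0 < p ≤ 1 and let J(x) = ∑_{i=1}^n |x_i|^p be the ℓ_p cost function on ℝⁿ. Let A be an m×n real matrix and k ≥ 1. If ker A satisfies NSP at sparsity k for J (i.e., for every z ∈ ker A with z ≠ 0 and every T with |T| ≤ k, ∑_{i∈T}|z_i|^p < ∑_{i∉T}|z_i|^p), then A satisfies RRC at sparsity k for J with some constant C > 0. (Exact recoverability and robust recoverability are equivalent for ℓ_p-minimization.) -/

import Mathlib

noncomputable section

/-- `F : ℝ → ℝ` is a sparseness measure: nonnegative on `[0,∞)`,
vanishing exactly at `0`, and `F (|·|)` is subadditive on `ℝ`. -/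
def SparsenessMeasure (F : ℝ → ℝ) : Prop :=
  (∀ t : ℝ, 0 ≤ t → 0 ≤ F t) ∧
  (∀ t : ℝ, 0 ≤ t → (F t = 0 ↔ t = 0)) ∧
  (∀ x y : ℝ, F |x + y| ≤ F |x| + F |y|)

/-- The cost function `J(x) = ∑ i, F |x i|` on `ℝⁿ`. -/
def costJ {n : ℕ} (F : ℝ → ℝ) (x : EuclideanSpace ℝ (Fin n)) : ℝ :=
  ∑ i, F |x i|

/-- The restricted cost `J(x_T) = ∑ i ∈ T, F |x i|`. -/
def costJT {n : ℕ} (F : ℝ → ℝ) (T : Finset (Fin n)) (x : EuclideanSpace ℝ (Fin n)) : ℝ :=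
  ∑ i ∈ T, F |x i|

/-- `x` has at most `k` nonzero entries. -/
def Sparse {n : ℕ} (k : ℕ) (x : EuclideanSpace ℝ (Fin n)) : Prop :=
  ∃ T : Finset (Fin n), T.card ≤ k ∧ ∀ i ∉ T, x i = 0

/-- The matrix `A` acting as a continuous linear map between Euclidean spaces. -/
def mulVecCLM {m n : ℕ} (A : Matrix (Fin m) (Fin n) ℝ) :
    EuclideanSpace ℝ (Fin n) →L[ℝ] EuclideanSpace ℝ (Fin m) :=
  (((EuclideanSpace.equiv (Fin m) ℝ).symm : (Fin m → ℝ) →L[ℝ] EuclideanSpace ℝ (Fin m)).comp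
    (Matrix.mulVecLin A).toContinuousLinearMap).comp
    ((EuclideanSpace.equiv (Fin n) ℝ) : EuclideanSpace ℝ (Fin n) →L[ℝ] (Fin n → ℝ))

/-- `A` satisfies the robust recovery condition at sparsity `k` for the cost `J_F`
with constant `C`: for every `k`-sparse `x̄`, every `ε > 0`, every noise `v` with
`‖v‖ ≤ ε`, and every feasible `x̂` with `J(x̂) ≤ J(x̄)`, one has `‖x̄ - x̂‖ ≤ C ε`. -/
def RRC {m n : ℕ} (A : Matrix (Fin m) (Fin n) ℝ) (k : ℕ) (F : ℝ → ℝ) (C : ℝ) : Prop :=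
  ∀ xbar : EuclideanSpace ℝ (Fin n), Sparse k xbar →
    ∀ ε : ℝ, 0 < ε →
      ∀ v : EuclideanSpace ℝ (Fin m), ‖v‖ ≤ ε →
        ∀ xhat : EuclideanSpace ℝ (Fin n),
          ‖mulVecCLM A xhat - (mulVecCLM A xbar + v)‖ ≤ ε →
            costJ F xhat ≤ costJ F xbar → ‖xbar - xhat‖ ≤ C * ε

/-- The robust null space condition with parameter `d` for `(A, k, J_F)`. -/
def RNSP {m n : ℕ} (A : Matrix (Fin m) (Fin n) ℝ) (k : ℕ) (F : ℝ → ℝ) (d : ℝ) : Prop :=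
  ∀ z ∈ LinearMap.ker (mulVecCLM A : EuclideanSpace ℝ (Fin n) →ₗ[ℝ] EuclideanSpace ℝ (Fin m)), z ≠ 0 →
    ∀ η : EuclideanSpace ℝ (Fin n), ‖η‖ < d * ‖z‖ →
      ∀ T : Finset (Fin n), T.card ≤ k →
        costJT F T (z + η) < costJT F Tᶜ (z + η)

lemma rpow_abs_add_le {p : ℝ} (hp0 : 0 < p) (hp1 : p ≤ 1) (a b : ℝ) :
    |a + b| ^ p ≤ |a| ^ p + |b| ^ p := by
  have h1 : |a + b| ^ p ≤ (|a| + |b|) ^ p :=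
    Real.rpow_le_rpow (abs_nonneg _) (abs_add_le a b) hp0.le
  refine h1.trans ?_
  have h := NNReal.rpow_add_le_add_rpow (Real.toNNReal |a|) (Real.toNNReal |b|) hp0.le hp1
  calc (|a| + |b|) ^ p
      = ((Real.toNNReal |a| + Real.toNNReal |b| : NNReal) : ℝ) ^ p := by
        rw [NNReal.coe_add, Real.coe_toNNReal _ (abs_nonneg a),
          Real.coe_toNNReal _ (abs_nonneg b)]
    _ = (((Real.toNNReal |a| + Real.toNNReal |b|) ^ p : NNReal) : ℝ) := by
        rw [NNReal.coe_rpow]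
    _ ≤ ((Real.toNNReal |a| ^ p + Real.toNNReal |b| ^ p : NNReal) : ℝ) := by
        exact_mod_cast h
    _ = |a| ^ p + |b| ^ p := by
        rw [NNReal.coe_add, NNReal.coe_rpow, NNReal.coe_rpow,
          Real.coe_toNNReal _ (abs_nonneg a), Real.coe_toNNReal _ (abs_nonneg b)]

/-- Key compactness lemma: under the NSP, `‖Aw‖` is bounded below on the set of
unit vectors violating (the strict form of) the NSP inequality. -/
lemma key_lemma {m n : ℕ} (p : ℝ) (hp0 : 0 < p)
    (A : Matrix (Fin m) (Fin n) ℝ) (k : ℕ)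
    (hnsp : ∀ z ∈ LinearMap.ker (mulVecCLM A : EuclideanSpace ℝ (Fin n) →ₗ[ℝ] EuclideanSpace ℝ (Fin m)), z ≠ 0 →
      ∀ T : Finset (Fin n), T.card ≤ k →
        ∑ i ∈ T, |z i| ^ p < ∑ i ∈ Tᶜ, |z i| ^ p) :
    ∃ c > 0, ∀ w : EuclideanSpace ℝ (Fin n), ‖w‖ = 1 →
      ∀ T : Finset (Fin n), T.card ≤ k →
        (∑ i ∈ Tᶜ, |w i| ^ p ≤ ∑ i ∈ T, |w i| ^ p) → c ≤ ‖mulVecCLM A w‖ := by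
  classical
  set K : Set (EuclideanSpace ℝ (Fin n)) :=
    {w | ‖w‖ = 1 ∧ ∃ T : Finset (Fin n), T.card ≤ k ∧
      ∑ i ∈ Tᶜ, |w i| ^ p ≤ ∑ i ∈ T, |w i| ^ p} with hKdef
  have hsum_cont : ∀ T : Finset (Fin n),
      Continuous fun w : EuclideanSpace ℝ (Fin n) => ∑ i ∈ T, |w i| ^ p := by
    intro T
    refine continuous_finset_sum _ fun i _ => ?_
    exact ((EuclideanSpace.proj i).continuous.abs).rpow_const fun x => Or.inr hp0.le
  have hKclosed : IsClosed K := by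
    have : K = {w : EuclideanSpace ℝ (Fin n) | ‖w‖ = 1} ∩
        ⋃ T ∈ {T : Finset (Fin n) | T.card ≤ k},
          {w : EuclideanSpace ℝ (Fin n) | ∑ i ∈ Tᶜ, |w i| ^ p ≤ ∑ i ∈ T, |w i| ^ p} := by
      ext w
      simp only [hKdef, Set.mem_inter_iff, Set.mem_setOf_eq, Set.mem_iUnion]
      tauto
    rw [this]
    refine IsClosed.inter ?_ ?_
    · have : {w : EuclideanSpace ℝ (Fin n) | ‖w‖ = 1} = Metric.sphere 0 1 := by
        ext w; simp [Metric.mem_sphere, dist_zero_right]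
      rw [this]; exact Metric.isClosed_sphere
    · refine Set.Finite.isClosed_biUnion (Set.toFinite _) fun T _ => ?_
      exact isClosed_le (hsum_cont Tᶜ) (hsum_cont T)
  have hKsub : K ⊆ Metric.closedBall (0 : EuclideanSpace ℝ (Fin n)) 1 := by
    intro w hw
    simp only [Metric.mem_closedBall, dist_zero_right]
    exact le_of_eq hw.1
  have hKcompact : IsCompact K :=
    (isCompact_closedBall (0 : EuclideanSpace ℝ (Fin n)) 1).of_isClosed_subset hKclosed hKsub
  rcases K.eq_empty_or_nonempty with hKe | hKne
  · refine ⟨1, one_pos, fun w hw T hT hle => absurd ?_ (Set.notMem_empty w)⟩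
    rw [← hKe]; exact ⟨hw, T, hT, hle⟩
  · obtain ⟨w₀, hw₀K, hmin⟩ := hKcompact.exists_isMinOn hKne
      ((mulVecCLM A).continuous.norm.continuousOn)
    refine ⟨‖mulVecCLM A w₀‖, ?_, fun w hw T hT hle => hmin ⟨hw, T, hT, hle⟩⟩
    rcases hw₀K with ⟨hw₀norm, T₀, hT₀, hle₀⟩
    rcases lt_or_eq_of_le (norm_nonneg (mulVecCLM A w₀)) with h | h
    · exact h
    · exfalso
      have hker : w₀ ∈ LinearMap.ker (mulVecCLM A : EuclideanSpace ℝ (Fin n) →ₗ[ℝ] EuclideanSpace ℝ (Fin m)) := by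
        rw [LinearMap.mem_ker]
        exact norm_eq_zero.mp h.symm
      have hne : w₀ ≠ 0 := by
        intro h0; rw [h0, norm_zero] at hw₀norm; exact zero_ne_one hw₀norm
      exact absurd (hnsp w₀ hker hne T₀ hT₀) (not_lt.mpr hle₀)

/-- Corollary: equivalence of ERC and RRC for `ℓ_p`-minimization:
if `0 < p ≤ 1` and the kernel of `A` satisfies the null space property at sparsity `k`
for the `ℓ_p` cost function, then `A` satisfies RRC at sparsity `k` for the `ℓ_p` cost
function with some constant `C > 0`. -/
theorem stmt6 {m n : ℕ} (p : ℝ) (hp0 : 0 < p) (hp1 : p ≤ 1)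
    (A : Matrix (Fin m) (Fin n) ℝ) (k : ℕ) (hk : 1 ≤ k)
    (hnsp : ∀ z ∈ LinearMap.ker (mulVecCLM A : EuclideanSpace ℝ (Fin n) →ₗ[ℝ] EuclideanSpace ℝ (Fin m)), z ≠ 0 →
      ∀ T : Finset (Fin n), T.card ≤ k →
        ∑ i ∈ T, |z i| ^ p < ∑ i ∈ Tᶜ, |z i| ^ p) :
    ∃ C > 0, RRC A k (fun t => |t| ^ p) C := by
  classical
  obtain ⟨c, hc, hcK⟩ := key_lemma p hp0 A k hnsp
  refine ⟨2 / c, by positivity, ?_⟩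
  rintro xbar ⟨T, hTcard, hT⟩ ε hε v hv xhat hfeas hJ
  set w : EuclideanSpace ℝ (Fin n) := xbar - xhat with hwdef
  by_cases hw0 : w = 0
  · rw [hw0, norm_zero]; positivity
  -- Step 1: J inequality on supports
  have hwi : ∀ i, w i = xbar i - xhat i := fun i => rfl
  have hJ' : ∑ i, |xhat i| ^ p ≤ ∑ i, |xbar i| ^ p := by
    simpa [costJ, abs_abs] using hJ
  have hsplit : ∀ x : EuclideanSpace ℝ (Fin n),
      ∑ i, |x i| ^ p = ∑ i ∈ T, |x i| ^ p + ∑ i ∈ Tᶜ, |x i| ^ p := by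
    intro x; rw [Finset.sum_add_sum_compl]
  have hcompl_xbar : ∑ i ∈ Tᶜ, |xbar i| ^ p = 0 := by
    refine Finset.sum_eq_zero fun i hi => ?_
    rw [hT i (Finset.mem_compl.mp hi), abs_zero, Real.zero_rpow hp0.ne']
  have hcompl_xhat : ∑ i ∈ Tᶜ, |xhat i| ^ p = ∑ i ∈ Tᶜ, |w i| ^ p := by
    refine Finset.sum_congr rfl fun i hi => ?_
    have : w i = - xhat i := by rw [hwi, hT i (Finset.mem_compl.mp hi)]; ring
    rw [this, abs_neg]
  have hT_xbar : ∑ i ∈ T, |xbar i| ^ p ≤ ∑ i ∈ T, |xhat i| ^ p + ∑ i ∈ T, |w i| ^ p := by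
    rw [← Finset.sum_add_distrib]
    refine Finset.sum_le_sum fun i _ => ?_
    have : xbar i = xhat i + w i := by rw [hwi]; ring
    rw [this]; exact rpow_abs_add_le hp0 hp1 (xhat i) (w i)
  have hkey : ∑ i ∈ Tᶜ, |w i| ^ p ≤ ∑ i ∈ T, |w i| ^ p := by
    have h1 := hsplit xhat
    have h2 := hsplit xbar
    linarith [hJ']
  -- Step 2: lower bound ‖A w‖ ≥ c ‖w‖ by rescaling into the key lemma
  have hwn : 0 < ‖w‖ := norm_pos_iff.mpr hw0
  set u : EuclideanSpace ℝ (Fin n) := ‖w‖⁻¹ • w with hudef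
  have hun : ‖u‖ = 1 := by
    rw [hudef, norm_smul, norm_inv, norm_norm, inv_mul_cancel₀ hwn.ne']
  have hui : ∀ i, |u i| ^ p = (‖w‖⁻¹) ^ p * |w i| ^ p := by
    intro i
    have : u i = ‖w‖⁻¹ * w i := rfl
    rw [this, abs_mul, abs_of_nonneg (inv_nonneg.mpr hwn.le),
      Real.mul_rpow (inv_nonneg.mpr hwn.le) (abs_nonneg _)]
  have huineq : ∑ i ∈ Tᶜ, |u i| ^ p ≤ ∑ i ∈ T, |u i| ^ p := by
    simp only [hui, ← Finset.mul_sum]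
    exact mul_le_mul_of_nonneg_left hkey (Real.rpow_nonneg (inv_nonneg.mpr hwn.le) p)
  have hAu : c ≤ ‖mulVecCLM A u‖ := hcK u hun T hTcard huineq
  have hAu' : ‖mulVecCLM A u‖ = ‖w‖⁻¹ * ‖mulVecCLM A w‖ := by
    rw [hudef, map_smul, norm_smul, norm_inv, norm_norm]
  have hlow : c * ‖w‖ ≤ ‖mulVecCLM A w‖ := by
    have h1 := mul_le_mul_of_nonneg_right hAu hwn.le
    rw [hAu'] at h1
    calc c * ‖w‖ ≤ (‖w‖⁻¹ * ‖mulVecCLM A w‖) * ‖w‖ := h1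
      _ = ‖mulVecCLM A w‖ := by field_simp
  -- Step 3: upper bound ‖A w‖ ≤ 2 ε
  have hAw : mulVecCLM A w = -((mulVecCLM A xhat - (mulVecCLM A xbar + v)) + v) := by
    rw [hwdef, map_sub]; abel
  have hup : ‖mulVecCLM A w‖ ≤ 2 * ε := by
    rw [hAw, norm_neg]
    calc ‖(mulVecCLM A xhat - (mulVecCLM A xbar + v)) + v‖
        ≤ ‖mulVecCLM A xhat - (mulVecCLM A xbar + v)‖ + ‖v‖ := norm_add_le _ _
      _ ≤ ε + ε := add_le_add hfeas hv
      _ = 2 * ε := by ring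
  -- Conclude
  have : ‖w‖ ≤ 2 / c * ε := by
    rw [div_mul_eq_mul_div, le_div_iff₀ hc]
    nlinarith
  simpa [hwdef] using this
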